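/- Let A_g = {t ∈ ℝ : sup{s ∈ [a,b] : g(s) = g(t)} ∈ D_g} and H_g = {t ∈ ℝ : t ∈ (s₁, s₂] for some s₁, s₂ ∈ D_g with (s₁, s₂) ⊂ C_g}. Let f₁, f₂ ∈ BC¹_g([a,b], 𝔽). Then f₁f₂ ∈ BC¹_g([a,b], 𝔽) if and only if (f₁)'_g(t)·(f₂)'_g(t) = 0 for all t ∈ ((a*, b) ∩ A_g) \ H_g. -/

import Mathlib

open Set Filter Topology
open scoped Classical

noncomputable section

/-- The right-hand limit `g(t⁺)` of a nondecreasing function `g`. -/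
def rLim (g : ℝ → ℝ) (t : ℝ) : ℝ := sInf (g '' Set.Ioi t)

/-- `Δg(t) = g(t⁺) − g(t)`. -/
def jump (g : ℝ → ℝ) (t : ℝ) : ℝ := rLim g t - g t

/-- `C_g`: the set of points near which `g` is constant. -/
def Cset (g : ℝ → ℝ) : Set ℝ :=
  {t | ∃ ε > 0, ∀ u ∈ Set.Ioo (t - ε) (t + ε), g u = g t}

/-- `D_g`: the set of discontinuity points of `g`. -/
def Dset (g : ℝ → ℝ) : Set ℝ := {t | 0 < jump g t}

/-- The right endpoints `b_n` of the connected components of the open set `C_g`. -/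
def rightEndpoints (g : ℝ → ℝ) : Set ℝ :=
  {x | x ∉ Cset g ∧ ∃ s, s < x ∧ Set.Ioo s x ⊆ Cset g}

/-- The left endpoints `a_n` of the connected components of the open set `C_g`. -/
def leftEndpoints (g : ℝ → ℝ) : Set ℝ :=
  {x | x ∉ Cset g ∧ ∃ s, x < s ∧ Set.Ioo x s ⊆ Cset g}

/-- `N_g⁻ = {a_n : n ∈ Λ} \ D_g`. -/
def Nminus (g : ℝ → ℝ) : Set ℝ := leftEndpoints g \ Dset g

/-- `N_g⁺ = {b_n : n ∈ Λ} \ D_g`. -/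
def Nplus (g : ℝ → ℝ) : Set ℝ := rightEndpoints g \ Dset g

/-- `N_g = N_g⁻ ∪ N_g⁺`. -/
def Nset (g : ℝ → ℝ) : Set ℝ := Nminus g ∪ Nplus g

/-- `t* = t` if `t ∉ C_g`, and `t* = b_n` (the right endpoint of the connected component
`(a_n, b_n)` of `C_g` containing `t`) if `t ∈ C_g`. -/
def tstar (g : ℝ → ℝ) (t : ℝ) : ℝ :=
  if t ∈ Cset g then sSup (connectedComponentIn (Cset g) t) else t

/-- The filter along which the Stieltjes difference quotient is taken at a point of `[a,b]`:
from the right at points of `D_g ∪ N_g⁺ ∪ {a}`, from the left at points of `N_g⁻ ∪ {b}`,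
two-sided otherwise. -/
def sFilter (g : ℝ → ℝ) (a b t : ℝ) : Filter ℝ :=
  if t ∈ Dset g ∨ t ∈ Nplus g ∨ t = a then 𝓝[Set.Ioi t ∩ Set.Icc a b] t
  else if t ∈ Nminus g ∨ t = b then 𝓝[Set.Iio t ∩ Set.Icc a b] t
  else 𝓝[Set.Icc a b \ {t}] t

/-- `f` has Stieltjes derivative (`g`-derivative) `L` at `t`, relative to `[a,b]`. -/
def HasSDerivAt {K : Type*} [RCLike K] (g : ℝ → ℝ) (a b : ℝ) (f : ℝ → K) (t : ℝ) (L : K) :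
    Prop :=
  Filter.Tendsto (fun s => (g s - g (tstar g t))⁻¹ • (f s - f (tstar g t)))
    (sFilter g a b (tstar g t)) (𝓝 L)

/-- `f` is `g`-differentiable at `t`, relative to `[a,b]`. -/
def SDiffAt {K : Type*} [RCLike K] (g : ℝ → ℝ) (a b : ℝ) (f : ℝ → K) (t : ℝ) : Prop :=
  ∃ L, HasSDerivAt g a b f t L

/-- `f` is `g`-continuous at `t` relative to the domain `D`. -/
def GContAt {K : Type*} [RCLike K] (g : ℝ → ℝ) (f : ℝ → K) (D : Set ℝ) (t : ℝ) : Prop :=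
  ∀ ε > 0, ∃ δ > 0, ∀ s ∈ D, |g t - g s| < δ → ‖f t - f s‖ < ε

/-- `D₁`: points of `[a,b] ∩ N_g⁻` accumulating `D_g ∩ [a,t)`. -/
def D1 (g : ℝ → ℝ) (a b : ℝ) : Set ℝ :=
  {x | x ∈ Set.Icc a b ∩ Nminus g ∧ AccPt x (𝓟 (Dset g ∩ Set.Ico a x))}

/-- `D₂`: points of `[a,b] ∩ N_g⁺` accumulating `D_g ∩ (t,b]`. -/
def D2 (g : ℝ → ℝ) (a b : ℝ) : Set ℝ :=
  {x | x ∈ Set.Icc a b ∩ Nplus g ∧ AccPt x (𝓟 (Dset g ∩ Set.Ioc x b))}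

/-- `D₃`: points of `[a,b] \ (N_g ∪ D_g)` accumulating `D_g ∩ [a,b]`. -/
def D3 (g : ℝ → ℝ) (a b : ℝ) : Set ℝ :=
  {x | x ∈ Set.Icc a b \ (Nset g ∪ Dset g) ∧ AccPt x (𝓟 (Dset g ∩ Set.Icc a b))}

/-- `D̃₁`: points of `[a,b] ∩ N_g⁻` not accumulating `D_g ∩ [a,t)`. -/
def Dt1 (g : ℝ → ℝ) (a b : ℝ) : Set ℝ :=
  {x | x ∈ Set.Icc a b ∩ Nminus g ∧ ¬ AccPt x (𝓟 (Dset g ∩ Set.Ico a x))}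

/-- `D̃₂`: points of `[a,b] ∩ (N_g⁺ ∪ D_g)` not accumulating `D_g ∩ (t,b]`. -/
def Dt2 (g : ℝ → ℝ) (a b : ℝ) : Set ℝ :=
  {x | x ∈ Set.Icc a b ∩ (Nplus g ∪ Dset g) ∧ ¬ AccPt x (𝓟 (Dset g ∩ Set.Ioc x b))}

/-- `D̃₃`: points of `[a,b] \ (C_g ∪ N_g ∪ D_g)` not accumulating `D_g ∩ [a,b]`. -/
def Dt3 (g : ℝ → ℝ) (a b : ℝ) : Set ℝ :=
  {x | x ∈ Set.Icc a b \ (Cset g ∪ Nset g ∪ Dset g) ∧ ¬ AccPt x (𝓟 (Dset g ∩ Set.Icc a b))}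

/-- `C₁`: points of `[a,b] ∩ N_g⁻` accumulating `C_g ∩ [a,t)`. -/
def C1 (g : ℝ → ℝ) (a b : ℝ) : Set ℝ :=
  {x | x ∈ Set.Icc a b ∩ Nminus g ∧ AccPt x (𝓟 (Cset g ∩ Set.Ico a x))}

/-- `C₂`: points of `[a,b] ∩ (N_g⁺ ∪ D_g)` accumulating `C_g ∩ (t,b]`. -/
def C2 (g : ℝ → ℝ) (a b : ℝ) : Set ℝ :=
  {x | x ∈ Set.Icc a b ∩ (Nplus g ∪ Dset g) ∧ AccPt x (𝓟 (Cset g ∩ Set.Ioc x b))}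

/-- `C₃`: points of `[a,b] \ (C_g ∪ N_g ∪ D_g)` accumulating `C_g ∩ [a,b]`. -/
def C3 (g : ℝ → ℝ) (a b : ℝ) : Set ℝ :=
  {x | x ∈ Set.Icc a b \ (Cset g ∪ Nset g ∪ Dset g) ∧ AccPt x (𝓟 (Cset g ∩ Set.Icc a b))}

/-- `A_g = {t : sup{s ∈ [a,b] : g(s) = g(t)} ∈ D_g}`. -/
def Ag (g : ℝ → ℝ) (a b : ℝ) : Set ℝ :=
  {t | sSup {s | s ∈ Set.Icc a b ∧ g s = g t} ∈ Dset g}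

/-- `H_g`: points lying in some `(s₁, s₂]` with `s₁, s₂ ∈ D_g` and `(s₁, s₂) ⊆ C_g`. -/
def Hg (g : ℝ → ℝ) : Set ℝ :=
  {t | ∃ s₁ ∈ Dset g, ∃ s₂ ∈ Dset g, t ∈ Set.Ioc s₁ s₂ ∧ Set.Ioo s₁ s₂ ⊆ Cset g}

/-- Membership in `BC_g([a,b], K)`: bounded and `g`-continuous on `[a,b]`. -/
def MemBCg {K : Type*} [RCLike K] (g : ℝ → ℝ) (a b : ℝ) (f : ℝ → K) : Prop :=
  (∃ M, ∀ s ∈ Set.Icc a b, ‖f s‖ ≤ M) ∧ ∀ s ∈ Set.Icc a b, GContAt g f (Set.Icc a b) s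

/-- Membership in `BC¹_g([a,b], K)`. -/
def MemBC1g {K : Type*} [RCLike K] (g : ℝ → ℝ) (a b : ℝ) (f : ℝ → K) : Prop :=
  MemBCg g a b f ∧
    ∃ f' : ℝ → K, (∀ s ∈ Set.Icc a b, HasSDerivAt g a b f s (f' s)) ∧ MemBCg g a b f'

section Basics

variable {g : ℝ → ℝ} (hg : Monotone g)
include hg

lemma g_le_rLim (t : ℝ) : g t ≤ rLim g t :=
  le_csInf (Set.nonempty_Ioi.image g) (by
    rintro x ⟨u, hu, rfl⟩; exact hg (le_of_lt hu))

lemma rLim_le {t u : ℝ} (h : t < u) : rLim g t ≤ g u :=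
  csInf_le ⟨g t, by rintro x ⟨v, hv, rfl⟩; exact hg (le_of_lt hv)⟩ ⟨u, h, rfl⟩

lemma jump_nonneg (t : ℝ) : 0 ≤ jump g t := sub_nonneg.2 (g_le_rLim hg t)

lemma rLim_of_gt {t u : ℝ} (h : t < u) : rLim g t ≤ g u := rLim_le hg h

lemma ge_rLim_of_gt {t u : ℝ} (h : t < u) : rLim g t ≤ g u := rLim_le hg h

lemma jump_eq_zero_of_not_Dset {t : ℝ} (h : t ∉ Dset g) : jump g t = 0 :=
  le_antisymm (not_lt.1 h) (jump_nonneg hg t)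

lemma rLim_eq_of_not_Dset {t : ℝ} (h : t ∉ Dset g) : rLim g t = g t := by
  have := jump_eq_zero_of_not_Dset hg h
  unfold jump at this; linarith

/-- values strictly above `t` are at least `rLim g t` -/
lemma rLim_le_of_lt {t u : ℝ} (h : t < u) : rLim g t ≤ g u := rLim_le hg h

lemma tendsto_g_right (t : ℝ) : Filter.Tendsto g (𝓝[>] t) (𝓝 (rLim g t)) :=
  hg.tendsto_nhdsGT t

omit hg in
lemma isOpen_Cset : IsOpen (Cset g) := by
  rw [isOpen_iff_forall_mem_open]
  rintro t ⟨ε, hε, hconst⟩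
  refine ⟨Set.Ioo (t - ε) (t + ε), ?_, isOpen_Ioo, by constructor <;> linarith⟩
  rintro u ⟨hu1, hu2⟩
  have h1 : 0 < min (u - (t - ε)) ((t + ε) - u) := by
    apply lt_min <;> linarith
  refine ⟨min (u - (t - ε)) ((t + ε) - u), h1, ?_⟩
  rintro v ⟨hv1, hv2⟩
  have hvm : v ∈ Set.Ioo (t - ε) (t + ε) := by
    have := min_le_left (u - (t - ε)) ((t + ε) - u)
    have := min_le_right (u - (t - ε)) ((t + ε) - u)
    constructor <;> nlinarith [hv1, hv2]
  rw [hconst v hvm, hconst u ⟨hu1, hu2⟩]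

/-- `g` is constant between two points with equal values. -/
lemma g_const_between {u v x : ℝ} (huv : g u = g v) (h1 : u ≤ x) (h2 : x ≤ v) :
    g x = g u :=
  le_antisymm (huv ▸ hg h2) (hg h1)

/-- The open interval between two points with equal `g`-values is in `Cset`. -/
lemma Ioo_subset_Cset {u v : ℝ} (huv : g u = g v) : Set.Ioo u v ⊆ Cset g := by
  rintro x ⟨hx1, hx2⟩
  refine ⟨min (x - u) (v - x), lt_min (by linarith) (by linarith), ?_⟩
  rintro w ⟨hw1, hw2⟩
  have h1 := min_le_left (x - u) (v - x)
  have h2 := min_le_right (x - u) (v - x)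
  have hwu : u ≤ w := by nlinarith
  have hwv : w ≤ v := by nlinarith
  rw [g_const_between hg huv hwu hwv, g_const_between hg huv (le_of_lt hx1) (le_of_lt hx2)]

lemma jump_eq_zero_of_Cset {t : ℝ} (h : t ∈ Cset g) : jump g t = 0 := by
  obtain ⟨ε, hε, hconst⟩ := h
  have h1 : rLim g t ≤ g t := by
    have : g (t + ε / 2) = g t := hconst _ ⟨by linarith, by linarith⟩
    calc rLim g t ≤ g (t + ε / 2) := rLim_le hg (by linarith)
    _ = g t := this
  have h2 := g_le_rLim hg t
  unfold jump; linarith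

lemma not_Cset_of_Dset {t : ℝ} (h : t ∈ Dset g) : t ∉ Cset g := fun hc => by
  have h0 := jump_eq_zero_of_Cset hg hc
  have h1 : (0:ℝ) < jump g t := h
  rw [h0] at h1
  exact lt_irrefl _ h1

/-- If `g` is locally constant on `[t, v]` then `g v = g t`. -/
lemma g_const_of_Icc_subset_Cset (hlc : ∀ x : ℝ, ContinuousWithinAt g (Set.Iio x) x) {t v : ℝ} (htv : t ≤ v) (h : Set.Icc t v ⊆ Cset g) :
    g v = g t := by
  rcases eq_or_lt_of_le htv with rfl | htv'
  · rfl
  set S := {w ∈ Set.Icc t v | g w = g t} with hS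
  have htS : t ∈ S := ⟨⟨le_rfl, htv⟩, rfl⟩
  have hbdd : BddAbove S := ⟨v, fun w hw => hw.1.2⟩
  set c := sSup S with hc
  have hcIcc : c ∈ Set.Icc t v := ⟨le_csSup hbdd htS, csSup_le ⟨t, htS⟩ fun w hw => hw.1.2⟩
  have hgc : g c = g t := by
    rcases eq_or_lt_of_le hcIcc.1 with h' | h'
    · rw [← h']
    · -- g = g t on [t, c), use left-continuity at c
      have hev : ∀ u ∈ Set.Ioo t c, g u = g t := by
        rintro u ⟨hu1, hu2⟩
        obtain ⟨w, hwS, hw⟩ := exists_lt_of_lt_csSup ⟨t, htS⟩ hu2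
        exact le_antisymm (hwS.2 ▸ hg (le_of_lt hw)) (hg (le_of_lt hu1))
      have h1 : Filter.Tendsto g (𝓝[Set.Ioo t c] c) (𝓝 (g c)) :=
        (hlc c).mono_left (nhdsWithin_mono _ (fun u hu => hu.2))
      have h2 : Filter.Tendsto g (𝓝[Set.Ioo t c] c) (𝓝 (g t)) := by
        apply Filter.Tendsto.congr' _ tendsto_const_nhds
        filter_upwards [self_mem_nhdsWithin] with u hu
        exact (hev u hu).symm
      have : (𝓝[Set.Ioo t c] c).NeBot := by
        rw [← mem_closure_iff_nhdsWithin_neBot, closure_Ioo (ne_of_lt h')]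
        exact ⟨le_of_lt h', le_rfl⟩
      exact tendsto_nhds_unique h1 h2
  -- now c = v, else local constancy extends S past c
  rcases eq_or_lt_of_le hcIcc.2 with h' | h'
  · rw [← h', hgc]
  · exfalso
    obtain ⟨ε, hε, hconst⟩ := h hcIcc
    set w := min v (c + ε / 2) with hw
    have hwS : w ∈ S := by
      have hwc : c < w := lt_min h' (by linarith)
      have hwv : w ≤ v := min_le_left _ _
      have hwlt : w < c + ε := lt_of_le_of_lt (min_le_right _ _) (by linarith)
      have : g w = g c := hconst w ⟨by linarith, hwlt⟩
      exact ⟨⟨le_trans hcIcc.1 (le_of_lt hwc), hwv⟩, by rw [this, hgc]⟩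
    have : w ≤ c := le_csSup hbdd hwS
    have hwc : c < w := lt_min h' (by linarith)
    linarith

end Basics

section Tstar

variable {g : ℝ → ℝ} (hg : Monotone g)
  (hlc : ∀ x : ℝ, ContinuousWithinAt g (Set.Iio x) x)
variable {b : ℝ} (hbC : b ∉ Cset g)
include hg

omit hg in
lemma comp_ordConnected (t : ℝ) : (connectedComponentIn (Cset g) t).OrdConnected :=
  isPreconnected_connectedComponentIn.ordConnected

omit hg in
lemma comp_subset_Iio (ht : t ∈ Cset g) (htb : t ≤ b) (hbC : b ∉ Cset g) :
    connectedComponentIn (Cset g) t ⊆ Set.Iio b := by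
  intro u hu
  by_contra h
  have hb' : b ∈ connectedComponentIn (Cset g) t :=
    (comp_ordConnected (g := g) t).out (mem_connectedComponentIn ht) hu ⟨htb, not_lt.1 h⟩
  exact hbC (connectedComponentIn_subset _ _ hb')

omit hg in
lemma comp_bddAbove (ht : t ∈ Cset g) (htb : t ≤ b) (hbC : b ∉ Cset g) :
    BddAbove (connectedComponentIn (Cset g) t) :=
  ⟨b, fun u hu => le_of_lt (comp_subset_Iio ht htb hbC hu)⟩

include hlc in
lemma g_eq_on_comp (ht : t ∈ Cset g) (hu : u ∈ connectedComponentIn (Cset g) t) :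
    g u = g t := by
  have htc := mem_connectedComponentIn ht
  have hoc := comp_ordConnected (g := g) t
  rcases le_total t u with h | h
  · exact g_const_of_Icc_subset_Cset hg hlc h
      (fun x hx => connectedComponentIn_subset _ _ (hoc.out htc hu hx))
  · have := g_const_of_Icc_subset_Cset hg hlc h
      (fun x hx => connectedComponentIn_subset _ _ (hoc.out hu htc hx))
    exact this.symm

omit hg in
lemma le_tstar (htb : t ≤ b) (hbC : b ∉ Cset g) : t ≤ tstar g t := by
  unfold tstar
  split_ifs with h
  · exact le_csSup (comp_bddAbove h htb hbC) (mem_connectedComponentIn h)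
  · exact le_rfl

omit hg in
lemma tstar_le (htb : t ≤ b) (hbC : b ∉ Cset g) : tstar g t ≤ b := by
  unfold tstar
  split_ifs with h
  · exact csSup_le ⟨t, mem_connectedComponentIn h⟩
      (fun u hu => le_of_lt (comp_subset_Iio h htb hbC hu))
  · exact htb

omit hg in
lemma lt_tstar_of_Cset (ht : t ∈ Cset g) (htb : t ≤ b) (hbC : b ∉ Cset g) :
    t < tstar g t := by
  have hop : IsOpen (connectedComponentIn (Cset g) t) :=
    (isOpen_Cset (g := g)).connectedComponentIn
  have htc := mem_connectedComponentIn ht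
  obtain ⟨ε, hε, hsub⟩ := Metric.isOpen_iff.1 hop t htc
  have h2 : t + ε / 2 ∈ connectedComponentIn (Cset g) t := by
    apply hsub
    rw [Metric.mem_ball, Real.dist_eq, abs_of_nonneg (by linarith)]
    · linarith
  have := le_csSup (comp_bddAbove ht htb hbC) h2
  unfold tstar
  rw [if_pos ht]
  linarith

include hlc in
lemma g_tstar (htb : t ≤ b) (hbC : b ∉ Cset g) : g (tstar g t) = g t := by
  by_cases ht : t ∈ Cset g
  · have hlt := lt_tstar_of_Cset ht htb hbC
    set c := sSup (connectedComponentIn (Cset g) t) with hc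
    have hts : tstar g t = c := by unfold tstar; rw [if_pos ht]
    rw [hts] at hlt ⊢
    -- g = g t on (t, c)
    have hev : ∀ u ∈ Set.Ioo t c, g u = g t := by
      rintro u ⟨hu1, hu2⟩
      obtain ⟨w, hwS, hw⟩ := exists_lt_of_lt_csSup
        ⟨t, mem_connectedComponentIn ht⟩ hu2
      have : u ∈ connectedComponentIn (Cset g) t :=
        (comp_ordConnected (g := g) t).out (mem_connectedComponentIn ht) hwS
          ⟨le_of_lt hu1, le_of_lt hw⟩
      exact g_eq_on_comp hg hlc ht this
    have h1 : Filter.Tendsto g (𝓝[Set.Ioo t c] c) (𝓝 (g c)) :=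
      (hlc c).mono_left (nhdsWithin_mono _ (fun u hu => hu.2))
    have h2 : Filter.Tendsto g (𝓝[Set.Ioo t c] c) (𝓝 (g t)) := by
      apply Filter.Tendsto.congr' _ tendsto_const_nhds
      filter_upwards [self_mem_nhdsWithin] with u hu
      exact (hev u hu).symm
    have : (𝓝[Set.Ioo t c] c).NeBot := by
      rw [← mem_closure_iff_nhdsWithin_neBot, closure_Ioo (ne_of_lt hlt)]
      exact ⟨le_of_lt hlt, le_rfl⟩
    exact tendsto_nhds_unique h1 h2
  · unfold tstar; rw [if_neg ht]

omit hg in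
lemma tstar_not_Cset (htb : t ≤ b) (hbC : b ∉ Cset g) : tstar g t ∉ Cset g := by
  by_cases ht : t ∈ Cset g
  · set c := sSup (connectedComponentIn (Cset g) t) with hc
    have hts : tstar g t = c := by unfold tstar; rw [if_pos ht]
    rw [hts]
    intro hcC
    -- points just below c lie in comp t and in comp c; merge, contradict sup
    have hlt := lt_tstar_of_Cset ht htb hbC
    rw [hts] at hlt
    have hopc : IsOpen (connectedComponentIn (Cset g) c) :=
      (isOpen_Cset (g := g)).connectedComponentIn
    obtain ⟨ε, hε, hsub⟩ := Metric.isOpen_iff.1 hopc c (mem_connectedComponentIn hcC)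
    set u := max t (c - ε / 2) with hu
    have huc : u < c := max_lt hlt (by linarith)
    have hu1 : u ∈ connectedComponentIn (Cset g) t := by
      obtain ⟨w, hwS, hw⟩ := exists_lt_of_lt_csSup
        ⟨t, mem_connectedComponentIn ht⟩ huc
      exact (comp_ordConnected (g := g) t).out (mem_connectedComponentIn ht) hwS
        ⟨le_max_left _ _, le_of_lt hw⟩
    have hu2 : u ∈ connectedComponentIn (Cset g) c := by
      apply hsub
      rw [Metric.mem_ball, Real.dist_eq, abs_of_nonpos (by linarith)]
      have := le_max_right t (c - ε / 2)
      linarith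
    have heq : connectedComponentIn (Cset g) t = connectedComponentIn (Cset g) c := by
      rw [connectedComponentIn_eq hu1, connectedComponentIn_eq hu2]
    have hc2 : c + ε / 2 ∈ connectedComponentIn (Cset g) t := by
      rw [heq]
      apply hsub
      rw [Metric.mem_ball, Real.dist_eq, abs_of_nonneg (by linarith)]
      linarith
    have := le_csSup (comp_bddAbove ht htb hbC) hc2
    rw [← hc] at this
    linarith
  · unfold tstar; rw [if_neg ht]; exact ht

omit hg in
lemma tstar_of_not_Cset (ht : t ∉ Cset g) : tstar g t = t := by
  unfold tstar; rw [if_neg ht]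

omit hg in
lemma tstar_tstar (htb : t ≤ b) (hbC : b ∉ Cset g) : tstar g (tstar g t) = tstar g t :=
  tstar_of_not_Cset (tstar_not_Cset htb hbC)

omit hg in
/-- `tstar` on a maximal constancy block `(σ, τ]`. -/
lemma tstar_block {σ τ s : ℝ} (hστ : σ < τ) (hsub : Set.Ioo σ τ ⊆ Cset g)
    (hσC : σ ∉ Cset g) (hτC : τ ∉ Cset g) (hs : s ∈ Set.Ioc σ τ) :
    tstar g s = τ := by
  rcases eq_or_lt_of_le hs.2 with rfl | hsτ
  · exact tstar_of_not_Cset hτC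
  · have hsC : s ∈ Cset g := hsub ⟨hs.1, hsτ⟩
    have hcomp : connectedComponentIn (Cset g) s = Set.Ioo σ τ := by
      apply le_antisymm
      · intro u hu
        have hoc := comp_ordConnected (g := g) s
        have hsc := mem_connectedComponentIn hsC
        constructor
        · by_contra h
          push_neg at h
          exact hσC (connectedComponentIn_subset _ _
            (hoc.out hu hsc ⟨h, le_of_lt hs.1⟩))
        · by_contra h
          push_neg at h
          exact hτC (connectedComponentIn_subset _ _
            (hoc.out hsc hu ⟨le_of_lt hsτ, h⟩))
      · exact isPreconnected_Ioo.subset_connectedComponentIn ⟨hs.1, hsτ⟩ hsub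
    unfold tstar
    rw [if_pos hsC, hcomp, csSup_Ioo hστ]

end Tstar

section Level

/-- `τ(t) = sup {s ∈ [a,b] : g s = g t}`. -/
def tauL (g : ℝ → ℝ) (a b t : ℝ) : ℝ := sSup {s | s ∈ Set.Icc a b ∧ g s = g t}

variable {g : ℝ → ℝ} (hg : Monotone g)
variable {a b : ℝ}
include hg

omit hg in
lemma mem_Ag_iff (t : ℝ) : t ∈ Ag g a b ↔ tauL g a b t ∈ Dset g := Iff.rfl

omit hg in
lemma level_bddAbove (t : ℝ) : BddAbove {s | s ∈ Set.Icc a b ∧ g s = g t} :=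
  ⟨b, fun s hs => hs.1.2⟩

omit hg in
lemma tau_mem_Icc {t : ℝ} (ht : t ∈ Set.Icc a b) : tauL g a b t ∈ Set.Icc a b :=
  ⟨le_trans ht.1 (le_csSup (level_bddAbove t) ⟨ht, rfl⟩),
   csSup_le ⟨t, ⟨ht, rfl⟩⟩ fun s hs => hs.1.2⟩

omit hg in
lemma le_tau {t : ℝ} (ht : t ∈ Set.Icc a b) : t ≤ tauL g a b t :=
  le_csSup (level_bddAbove t) ⟨ht, rfl⟩

omit hg in
lemma tau_congr {s t : ℝ} (h : g s = g t) : tauL g a b s = tauL g a b t := by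
  unfold tauL; rw [h]

lemma g_tau (hlc : ∀ x : ℝ, ContinuousWithinAt g (Set.Iio x) x) {t : ℝ} (ht : t ∈ Set.Icc a b) : g (tauL g a b t) = g t := by
  set τ := tauL g a b t with hτ
  have htτ : t ≤ τ := le_tau ht
  rcases eq_or_lt_of_le htτ with h | h
  · rw [← h]
  · have hev : ∀ u ∈ Set.Ioo t τ, g u = g t := by
      rintro u ⟨hu1, hu2⟩
      have hu2' : u < sSup {s | s ∈ Set.Icc a b ∧ g s = g t} := hu2
      obtain ⟨w, hwS, hw⟩ := exists_lt_of_lt_csSup (s := {s | s ∈ Set.Icc a b ∧ g s = g t}) ⟨t, ⟨ht, rfl⟩⟩ hu2'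
      exact le_antisymm (hwS.2 ▸ hg (le_of_lt hw)) (hg (le_of_lt hu1))
    have h1 : Filter.Tendsto g (𝓝[Set.Ioo t τ] τ) (𝓝 (g τ)) :=
      (hlc τ).mono_left (nhdsWithin_mono _ (fun u hu => hu.2))
    have h2 : Filter.Tendsto g (𝓝[Set.Ioo t τ] τ) (𝓝 (g t)) := by
      apply Filter.Tendsto.congr' _ tendsto_const_nhds
      filter_upwards [self_mem_nhdsWithin] with u hu
      exact (hev u hu).symm
    have : (𝓝[Set.Ioo t τ] τ).NeBot := by
      rw [← mem_closure_iff_nhdsWithin_neBot, closure_Ioo (ne_of_lt h)]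
      exact ⟨le_of_lt h, le_rfl⟩
    exact tendsto_nhds_unique h1 h2

omit hg in
lemma le_tau_of_level {s t : ℝ} (hs : s ∈ Set.Icc a b) (h : g s = g t) :
    s ≤ tauL g a b t :=
  le_csSup (level_bddAbove t) ⟨hs, h⟩

lemma tau_lt_of_g_gt (hlc : ∀ x : ℝ, ContinuousWithinAt g (Set.Iio x) x) {s t : ℝ} (ht : t ∈ Set.Icc a b) (h : g t < g s) :
    tauL g a b t < s := by
  by_contra hc
  push_neg at hc
  have := hg hc
  rw [g_tau hg hlc ht] at this
  linarith

lemma tstar_eq_tau_of_jump (hlc : ∀ x : ℝ, ContinuousWithinAt g (Set.Iio x) x) {t : ℝ} (ht : t ∈ Set.Icc a b)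
    (hbC : b ∉ Cset g) (hj : 0 < jump g (tstar g t)) :
    tstar g t = tauL g a b t := by
  have h1 : tstar g t ≤ b := tstar_le ht.2 hbC
  have h2 : a ≤ tstar g t := le_trans ht.1 (le_tstar ht.2 hbC)
  have hgt : g (tstar g t) = g t := g_tstar hg hlc ht.2 hbC
  apply le_antisymm
  · exact le_tau_of_level ⟨h2, h1⟩ hgt
  · by_contra hc
    push_neg at hc
    have hc' : tstar g t < sSup {s | s ∈ Set.Icc a b ∧ g s = g t} := hc
    obtain ⟨w, hwS, hw⟩ := exists_lt_of_lt_csSup (s := {s | s ∈ Set.Icc a b ∧ g s = g t}) ⟨t, ⟨ht, rfl⟩⟩ hc'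
    have := rLim_le hg hw
    rw [hwS.2, ← hgt] at this
    unfold jump at hj
    linarith

lemma jump_tstar_le (hlc : ∀ x : ℝ, ContinuousWithinAt g (Set.Iio x) x) {s : ℝ} (hs : s ∈ Set.Icc a b) (hbC : b ∉ Cset g)
    {t' : ℝ} (h : g s < g t') : jump g (tstar g s) ≤ g t' - g s := by
  have hgs : g (tstar g s) = g s := g_tstar hg hlc hs.2 hbC
  have hlt : tstar g s < t' := by
    by_contra hc
    push_neg at hc
    have := hg hc
    rw [hgs] at this
    linarith
  have := rLim_le hg hlt
  unfold jump
  rw [hgs]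
  linarith

/-- Jumps of size `≥ ε'` with values just above `g t` can be excluded by a suitable `δ`. -/
lemma small_jumps (t : ℝ) {ε' : ℝ} (hε' : 0 < ε') :
    ∃ δ > 0, ∀ σ ∈ Dset g, g t < g σ → g σ < g t + δ → jump g σ < ε' := by
  by_cases hV : ∃ σ₀, σ₀ ∈ Dset g ∧ g t < g σ₀ ∧ g σ₀ < g t + ε' ∧ ε' ≤ jump g σ₀
  · obtain ⟨σ₀, hσ₀D, hσ₀1, hσ₀2, hσ₀3⟩ := hV
    refine ⟨g σ₀ - g t, by linarith, ?_⟩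
    intro σ hσD hσ1 hσ2
    by_contra hc
    push_neg at hc
    -- σ and σ₀ both have jump ≥ ε', g-values in (g t, g σ₀]
    rcases lt_trichotomy (g σ) (g σ₀) with h | h | h
    · -- σ < σ₀, so g σ₀ ≥ rLim g σ = g σ + jump σ ≥ g t + ε'
      have hlt : σ < σ₀ := by
        by_contra hc2
        push_neg at hc2
        exact absurd (hg hc2) (not_le.2 h)
      have := rLim_le hg hlt
      unfold jump at hc
      linarith
    · -- equal values: both jump, contradiction unless σ = σ₀
      rcases lt_trichotomy σ σ₀ with h2 | h2 | h2
      · have := rLim_le hg h2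
        have hj : (0:ℝ) < jump g σ := hσD
        unfold jump at hj
        linarith
      · rw [h2] at hc; linarith
      · have := rLim_le hg h2
        have hj : (0:ℝ) < jump g σ₀ := hσ₀D
        unfold jump at hj
        linarith
    · linarith
  · push_neg at hV
    refine ⟨ε', hε', ?_⟩
    intro σ hσD hσ1 hσ2
    by_contra hc
    push_neg at hc
    exact absurd hc (not_le.2 (hV σ hσD hσ1 hσ2))

end Level

section GCont

variable {K : Type*} [RCLike K] {g : ℝ → ℝ} {D : Set ℝ}

lemma gcont_eq {f : ℝ → K} {t s : ℝ} (hf : GContAt g f D t) (hs : s ∈ D)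
    (h : g s = g t) : f s = f t := by
  by_contra hne
  have hpos : 0 < ‖f t - f s‖ := by
    rw [norm_pos_iff, sub_ne_zero]
    exact fun h' => hne h'.symm
  obtain ⟨δ, hδ, hδ'⟩ := hf _ hpos
  have := hδ' s hs (by rw [h]; simpa using hδ)
  exact lt_irrefl _ this

lemma GContAt.congr {f f' : ℝ → K} {t : ℝ} (ht : t ∈ D)
    (h : ∀ s ∈ D, f s = f' s) (hf : GContAt g f D t) : GContAt g f' D t := by
  intro ε hε
  obtain ⟨δ, hδ, hδ'⟩ := hf ε hε
  exact ⟨δ, hδ, fun s hs hgs => by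
    rw [← h s hs, ← h t ht]; exact hδ' s hs hgs⟩

lemma GContAt.add {f₁ f₂ : ℝ → K} {t : ℝ} (h₁ : GContAt g f₁ D t)
    (h₂ : GContAt g f₂ D t) : GContAt g (fun s => f₁ s + f₂ s) D t := by
  intro ε hε
  obtain ⟨δ₁, hδ₁, hδ₁'⟩ := h₁ (ε / 2) (by linarith)
  obtain ⟨δ₂, hδ₂, hδ₂'⟩ := h₂ (ε / 2) (by linarith)
  refine ⟨min δ₁ δ₂, lt_min hδ₁ hδ₂, fun s hs hgs => ?_⟩
  have e₁ := hδ₁' s hs (lt_of_lt_of_le hgs (min_le_left _ _))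
  have e₂ := hδ₂' s hs (lt_of_lt_of_le hgs (min_le_right _ _))
  calc ‖f₁ t + f₂ t - (f₁ s + f₂ s)‖ = ‖(f₁ t - f₁ s) + (f₂ t - f₂ s)‖ := by ring_nf
  _ ≤ ‖f₁ t - f₁ s‖ + ‖f₂ t - f₂ s‖ := norm_add_le _ _
  _ < ε := by linarith

lemma GContAt.sub {f₁ f₂ : ℝ → K} {t : ℝ} (h₁ : GContAt g f₁ D t)
    (h₂ : GContAt g f₂ D t) : GContAt g (fun s => f₁ s - f₂ s) D t := by
  intro ε hε
  obtain ⟨δ₁, hδ₁, hδ₁'⟩ := h₁ (ε / 2) (by linarith)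
  obtain ⟨δ₂, hδ₂, hδ₂'⟩ := h₂ (ε / 2) (by linarith)
  refine ⟨min δ₁ δ₂, lt_min hδ₁ hδ₂, fun s hs hgs => ?_⟩
  have e₁ := hδ₁' s hs (lt_of_lt_of_le hgs (min_le_left _ _))
  have e₂ := hδ₂' s hs (lt_of_lt_of_le hgs (min_le_right _ _))
  calc ‖f₁ t - f₂ t - (f₁ s - f₂ s)‖ = ‖(f₁ t - f₁ s) - (f₂ t - f₂ s)‖ := by ring_nf
  _ ≤ ‖f₁ t - f₁ s‖ + ‖f₂ t - f₂ s‖ := norm_sub_le _ _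
  _ < ε := by linarith

lemma GContAt.mul {f₁ f₂ : ℝ → K} {t : ℝ} {M : ℝ}
    (hM : ∀ s ∈ D, ‖f₂ s‖ ≤ M)
    (h₁ : GContAt g f₁ D t) (h₂ : GContAt g f₂ D t) :
    GContAt g (fun s => f₁ s * f₂ s) D t := by
  intro ε hε
  set N := max M 0 with hN
  have hN0 : (0:ℝ) ≤ N := le_max_right _ _
  have hMN : ∀ s ∈ D, ‖f₂ s‖ ≤ N := fun s hs => le_trans (hM s hs) (le_max_left _ _)
  set C := ‖f₁ t‖ + N + 1 with hC
  have hC0 : 0 < C := by positivity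
  obtain ⟨δ₁, hδ₁, hδ₁'⟩ := h₁ (ε / (2 * C)) (by positivity)
  obtain ⟨δ₂, hδ₂, hδ₂'⟩ := h₂ (ε / (2 * C)) (by positivity)
  refine ⟨min δ₁ δ₂, lt_min hδ₁ hδ₂, fun s hs hgs => ?_⟩
  have e₁ := hδ₁' s hs (lt_of_lt_of_le hgs (min_le_left _ _))
  have e₂ := hδ₂' s hs (lt_of_lt_of_le hgs (min_le_right _ _))
  have key : f₁ t * f₂ t - f₁ s * f₂ s
      = f₁ t * (f₂ t - f₂ s) + (f₁ t - f₁ s) * f₂ s := by ring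
  have hb1 : ‖f₁ t‖ ≤ C := by rw [hC]; linarith
  have hb2 : ‖f₂ s‖ ≤ C := by rw [hC]; have := hMN s hs; have := norm_nonneg (f₁ t); linarith
  calc ‖f₁ t * f₂ t - f₁ s * f₂ s‖
      = ‖f₁ t * (f₂ t - f₂ s) + (f₁ t - f₁ s) * f₂ s‖ := by rw [key]
  _ ≤ ‖f₁ t * (f₂ t - f₂ s)‖ + ‖(f₁ t - f₁ s) * f₂ s‖ := norm_add_le _ _
  _ = ‖f₁ t‖ * ‖f₂ t - f₂ s‖ + ‖f₁ t - f₁ s‖ * ‖f₂ s‖ := by rw [norm_mul, norm_mul]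
  _ ≤ C * ‖f₂ t - f₂ s‖ + ‖f₁ t - f₁ s‖ * C := by
      have u1 := mul_le_mul_of_nonneg_right hb1 (norm_nonneg (f₂ t - f₂ s))
      have u2 := mul_le_mul_of_nonneg_left hb2 (norm_nonneg (f₁ t - f₁ s))
      linarith
  _ < C * (ε / (2 * C)) + (ε / (2 * C)) * C := by
      apply add_lt_add
      · exact (mul_lt_mul_iff_right₀ hC0).2 e₂
      · exact (mul_lt_mul_iff_left₀ hC0).2 e₁
  _ = ε := by field_simp; ring

end GCont

section NeBotSec

variable {g : ℝ → ℝ} {a b : ℝ}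

lemma nhdsWithin_right_neBot' {x c : ℝ} (h : x < c) {s : Set ℝ}
    (hs : Set.Ioc x c ⊆ s) : (𝓝[s] x).NeBot := by
  have h1 : (𝓝[Set.Ioc x c] x).NeBot := by
    rw [← mem_closure_iff_nhdsWithin_neBot, closure_Ioc (ne_of_lt h)]
    exact ⟨le_rfl, le_of_lt h⟩
  exact h1.mono (nhdsWithin_mono _ hs)

lemma nhdsWithin_left_neBot' {x c : ℝ} (h : c < x) {s : Set ℝ}
    (hs : Set.Ico c x ⊆ s) : (𝓝[s] x).NeBot := by
  have h1 : (𝓝[Set.Ico c x] x).NeBot := by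
    rw [← mem_closure_iff_nhdsWithin_neBot, closure_Ico (ne_of_lt h)]
    exact ⟨le_of_lt h, le_rfl⟩
  exact h1.mono (nhdsWithin_mono _ hs)

lemma sFilter_neBot (hab : a < b) (ha : a ∉ Nminus g ∪ Dset g)
    (hb : b ∉ Dset g ∪ Cset g ∪ Nplus g) {T : ℝ} (hT : T ∈ Set.Icc a b) :
    (sFilter g a b T).NeBot := by
  unfold sFilter
  split_ifs with h1 h2
  · -- right filter; T < b in all cases
    have hTb : T < b := by
      rcases h1 with h | h | h
      · rcases lt_or_eq_of_le hT.2 with h' | h'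
        · exact h'
        · exact absurd (h' ▸ h) (fun hc => hb (Or.inl (Or.inl hc)))
      · rcases lt_or_eq_of_le hT.2 with h' | h'
        · exact h'
        · exact absurd (h' ▸ h) (fun hc => hb (Or.inr hc))
      · rw [h]; exact hab
    exact nhdsWithin_right_neBot' hTb
      (fun u hu => ⟨hu.1, le_trans hT.1 (le_of_lt hu.1), hu.2⟩)
  · -- left filter; a < T in all cases
    have hTa : a < T := by
      rcases h2 with h | h
      · rcases lt_or_eq_of_le hT.1 with h' | h'
        · exact h'
        · exact absurd (h' ▸ h) (fun hc => ha (Or.inl hc))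
      · rw [h]; exact hab
    exact nhdsWithin_left_neBot' hTa
      (fun u hu => ⟨hu.2, hu.1, le_trans (le_of_lt hu.2) hT.2⟩)
  · -- two-sided
    rcases lt_or_eq_of_le hT.2 with h' | h'
    · exact nhdsWithin_right_neBot' h'
        (fun u hu => ⟨⟨le_trans hT.1 (le_of_lt hu.1), hu.2⟩, ne_of_gt hu.1⟩)
    · have hTa : a < T := h' ▸ hab
      exact nhdsWithin_left_neBot' hTa
        (fun u hu => ⟨⟨hu.1, le_trans (le_of_lt hu.2) hT.2⟩, ne_of_lt hu.2⟩)

variable {K : Type*} [RCLike K]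

lemma sderiv_unique (hab : a < b) (ha : a ∉ Nminus g ∪ Dset g)
    (hb : b ∉ Dset g ∪ Cset g ∪ Nplus g) {f : ℝ → K} {s : ℝ} {L₁ L₂ : K}
    (hs : s ∈ Set.Icc a b)
    (h₁ : HasSDerivAt g a b f s L₁) (h₂ : HasSDerivAt g a b f s L₂) : L₁ = L₂ := by
  have hbC : b ∉ Cset g := fun hc => hb (Or.inl (Or.inr hc))
  have hT : tstar g s ∈ Set.Icc a b :=
    ⟨le_trans hs.1 (le_tstar hs.2 hbC), tstar_le hs.2 hbC⟩
  haveI := sFilter_neBot hab ha hb hT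
  exact tendsto_nhds_unique h₁ h₂

lemma hasSDerivAt_tstar_iff (hbC : b ∉ Cset g) {f : ℝ → K} {s : ℝ} {L : K}
    (hs : s ≤ b) :
    HasSDerivAt g a b f (tstar g s) L ↔ HasSDerivAt g a b f s L := by
  unfold HasSDerivAt
  rw [tstar_tstar hs hbC]

lemma deriv_tstar_eq (hab : a < b) (ha : a ∉ Nminus g ∪ Dset g)
    (hb : b ∉ Dset g ∪ Cset g ∪ Nplus g) {f : ℝ → K} {f' : ℝ → K}
    (hd : ∀ u ∈ Set.Icc a b, HasSDerivAt g a b f u (f' u)) {s : ℝ}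
    (hs : s ∈ Set.Icc a b) : f' (tstar g s) = f' s := by
  have hbC : b ∉ Cset g := fun hc => hb (Or.inl (Or.inr hc))
  have hT : tstar g s ∈ Set.Icc a b :=
    ⟨le_trans hs.1 (le_tstar hs.2 hbC), tstar_le hs.2 hbC⟩
  have h1 : HasSDerivAt g a b f s (f' (tstar g s)) :=
    (hasSDerivAt_tstar_iff hbC hs.2).1 (hd _ hT)
  exact sderiv_unique hab ha hb hs h1 (hd s hs)

end NeBotSec

section FilterFacts

variable {g : ℝ → ℝ} (hg : Monotone g)
variable {a b : ℝ}
include hg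

/-- On a right constancy interval, `g` equals `rLim g T`. -/
lemma g_eq_rLim_right (hlc : ∀ x : ℝ, ContinuousWithinAt g (Set.Iio x) x)
    {T s' : ℝ} (hTs : T < s') (hsub : Set.Ioo T s' ⊆ Cset g) :
    ∀ u ∈ Set.Ioo T s', g u = rLim g T := by
  have hconst : ∀ u ∈ Set.Ioo T s', ∀ v ∈ Set.Ioo T s', u ≤ v → g v = g u := by
    rintro u hu v hv huv
    exact g_const_of_Icc_subset_Cset hg hlc huv
      (fun x hx => hsub ⟨lt_of_lt_of_le hu.1 hx.1, lt_of_le_of_lt hx.2 hv.2⟩)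
  set m := (T + s') / 2 with hm
  have hmm : m ∈ Set.Ioo T s' := ⟨by rw [hm]; linarith, by rw [hm]; linarith⟩
  have hval : ∀ u ∈ Set.Ioo T s', g u = g m := by
    intro u hu
    rcases le_total u m with h | h
    · exact (hconst u hu m hmm h).symm
    · exact hconst m hmm u hu h
  have h1 : rLim g T ≤ g m := rLim_le hg hmm.1
  have h2 : g m ≤ rLim g T := by
    apply le_csInf (Set.nonempty_Ioi.image g)
    rintro x ⟨w, hw, rfl⟩
    rcases lt_or_ge w s' with h | h
    · rw [hval w ⟨hw, h⟩]
    · exact hg (le_trans (le_of_lt hmm.2) h)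
  intro u hu
  rw [hval u hu]
  linarith

/-- On a left constancy interval, `g` equals `g T`. -/
lemma g_eq_left (hlc : ∀ x : ℝ, ContinuousWithinAt g (Set.Iio x) x)
    {c T : ℝ} (hcT : c < T) (hsub : Set.Ioo c T ⊆ Cset g) :
    ∀ u ∈ Set.Ioo c T, g u = g T := by
  have key : ∀ u ∈ Set.Ioo c T, ∀ v ∈ Set.Ioo c T, u ≤ v → g v = g u := by
    rintro u hu v hv huv
    exact g_const_of_Icc_subset_Cset hg hlc huv
      (fun x hx => hsub ⟨lt_of_lt_of_le hu.1 hx.1, lt_of_le_of_lt hx.2 hv.2⟩)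
  intro u hu
  -- g T is the left limit of the constant value
  have hev : ∀ w ∈ Set.Ioo u T, g w = g u := by
    intro w hw
    exact key u hu w ⟨lt_trans hu.1 hw.1, hw.2⟩ (le_of_lt hw.1)
  have h1 : Filter.Tendsto g (𝓝[Set.Ioo u T] T) (𝓝 (g T)) :=
    (hlc T).mono_left (nhdsWithin_mono _ (fun w hw => hw.2))
  have h2 : Filter.Tendsto g (𝓝[Set.Ioo u T] T) (𝓝 (g u)) := by
    apply Filter.Tendsto.congr' _ tendsto_const_nhds
    filter_upwards [self_mem_nhdsWithin] with w hw
    exact (hev w hw).symm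
  have : (𝓝[Set.Ioo u T] T).NeBot := by
    rw [← mem_closure_iff_nhdsWithin_neBot, closure_Ioo (ne_of_lt hu.2)]
    exact ⟨le_of_lt hu.2, le_rfl⟩
  exact (tendsto_nhds_unique h1 h2).symm

lemma g_ne_right_of_Dset {T u : ℝ} (hT : T ∈ Dset g) (hu : T < u) : g u ≠ g T := by
  have h1 := rLim_le hg hu
  have h2 : (0:ℝ) < jump g T := hT
  unfold jump at h2
  intro h
  rw [h] at h1
  linarith

lemma g_ne_right_of_Nplus (hlc : ∀ x : ℝ, ContinuousWithinAt g (Set.Iio x) x)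
    {T u : ℝ} (hT : T ∈ Nplus g) (hu : T < u) : g u ≠ g T := by
  intro heq
  obtain ⟨⟨hTC, c, hc, hsub⟩, hTD⟩ := hT
  apply hTC
  have hrl : rLim g T = g T := rLim_eq_of_not_Dset hg hTD
  have hmid : ∀ w ∈ Set.Ioo c u, g w = g T := by
    rintro w ⟨hw1, hw2⟩
    rcases lt_trichotomy w T with h | h | h
    · exact g_eq_left hg hlc hc hsub w ⟨hw1, h⟩
    · rw [h]
    · have hIoo : Set.Ioo T u ⊆ Cset g := Ioo_subset_Cset hg heq.symm
      rw [g_eq_rLim_right hg hlc hu hIoo w ⟨h, hw2⟩, hrl]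
  refine ⟨min (T - c) (u - T), lt_min (by linarith) (by linarith), ?_⟩
  rintro w ⟨hw1, hw2⟩
  have m1 := min_le_left (T - c) (u - T)
  have m2 := min_le_right (T - c) (u - T)
  rw [hmid w ⟨by linarith, by linarith⟩, hmid T ⟨hc, hu⟩]

lemma g_ne_right_of_a {u : ℝ} (haC : a ∉ Cset g) (ha : a ∉ Nminus g ∪ Dset g)
    (hu : a < u) : g u ≠ g a := by
  intro heq
  have hIoo : Set.Ioo a u ⊆ Cset g := Ioo_subset_Cset hg heq.symm
  have : a ∈ Nminus g := ⟨⟨haC, u, hu, hIoo⟩, fun h => ha (Or.inr h)⟩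
  exact ha (Or.inl this)

lemma g_ne_left_of_Nminus (hlc : ∀ x : ℝ, ContinuousWithinAt g (Set.Iio x) x)
    {T u : ℝ} (hT : T ∈ Nminus g) (hu : u < T) : g u ≠ g T := by
  intro heq
  obtain ⟨⟨hTC, s', hs', hsub⟩, hTD⟩ := hT
  apply hTC
  have hrl : rLim g T = g T := rLim_eq_of_not_Dset hg hTD
  have hmid : ∀ w ∈ Set.Ioo u s', g w = g T := by
    rintro w ⟨hw1, hw2⟩
    rcases lt_trichotomy w T with h | h | h
    · exact (g_const_between hg heq (le_of_lt hw1) (le_of_lt h)).trans heq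
    · rw [h]
    · rw [g_eq_rLim_right hg hlc hs' hsub w ⟨h, hw2⟩, hrl]
  refine ⟨min (T - u) (s' - T), lt_min (by linarith) (by linarith), ?_⟩
  rintro w ⟨hw1, hw2⟩
  have m1 := min_le_left (T - u) (s' - T)
  have m2 := min_le_right (T - u) (s' - T)
  rw [hmid w ⟨by linarith, by linarith⟩, hmid T ⟨hu, hs'⟩]

lemma g_ne_left_of_b {u : ℝ} (hb : b ∉ Dset g ∪ Cset g ∪ Nplus g)
    (hu : u < b) : g u ≠ g b := by
  intro heq
  have hIoo : Set.Ioo u b ⊆ Cset g := Ioo_subset_Cset hg heq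
  exact hb (Or.inr ⟨⟨fun h => hb (Or.inl (Or.inr h)), u, hu, hIoo⟩,
    fun h => hb (Or.inl (Or.inl h))⟩)

lemma g_ne_two_sided {T u : ℝ} (hTC : T ∉ Cset g) (hTD : T ∉ Dset g)
    (hTNp : T ∉ Nplus g) (hTNm : T ∉ Nminus g) (hu : u ≠ T) : g u ≠ g T := by
  intro heq
  rcases lt_or_gt_of_ne hu with h | h
  · exact hTNp ⟨⟨hTC, u, h, Ioo_subset_Cset hg heq⟩, hTD⟩
  · exact hTNm ⟨⟨hTC, u, h, Ioo_subset_Cset hg heq.symm⟩, hTD⟩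

/-- Along `sFilter g a b T`, eventually `g u ≠ g T` (for relevant `T`). -/
lemma eventually_g_ne_sFilter (hlc : ∀ x : ℝ, ContinuousWithinAt g (Set.Iio x) x)
    (ha : a ∉ Nminus g ∪ Dset g) (hb : b ∉ Dset g ∪ Cset g ∪ Nplus g)
    {T : ℝ} (hTC : T ∉ Cset g) :
    ∀ᶠ u in sFilter g a b T, g u ≠ g T := by
  unfold sFilter
  split_ifs with h1 h2
  · filter_upwards [self_mem_nhdsWithin] with u hu
    rcases h1 with h | h | h
    · exact g_ne_right_of_Dset hg h hu.1
    · exact g_ne_right_of_Nplus hg hlc h hu.1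
    · subst h; exact g_ne_right_of_a hg hTC ha hu.1
  · filter_upwards [self_mem_nhdsWithin] with u hu
    rcases h2 with h | h
    · exact g_ne_left_of_Nminus hg hlc h hu.1
    · subst h; exact g_ne_left_of_b hg hb hu.1
  · push_neg at h1 h2
    filter_upwards [self_mem_nhdsWithin] with u hu
    exact g_ne_two_sided hg hTC h1.1 h1.2.1 h2.1 hu.2

/-- `g` tends to `rLim g T` along `sFilter g a b T`. -/
lemma tendsto_g_sFilter (hlc : ∀ x : ℝ, ContinuousWithinAt g (Set.Iio x) x)
    (hbD : b ∉ Dset g) (T : ℝ) :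
    Filter.Tendsto g (sFilter g a b T) (𝓝 (rLim g T)) := by
  unfold sFilter
  split_ifs with h1 h2
  · exact (tendsto_g_right hg T).mono_left
      (nhdsWithin_mono _ Set.inter_subset_left)
  · have hTD : T ∉ Dset g := by
      rcases h2 with h | h
      · exact h.2
      · subst h; exact hbD
    rw [rLim_eq_of_not_Dset hg hTD]
    exact (hlc T).mono_left (nhdsWithin_mono _ Set.inter_subset_left)
  · push_neg at h1
    rw [rLim_eq_of_not_Dset hg h1.1]
    have hsub : Set.Icc a b \ {T} ⊆ {T}ᶜ := fun u hu => hu.2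
    apply Filter.Tendsto.mono_left _ (nhdsWithin_mono _ hsub)
    have heq : (𝓝[<] T ⊔ 𝓝[>] T) = 𝓝[({T}ᶜ : Set ℝ)] T := nhdsLT_sup_nhdsGT T
    rw [← heq, Filter.tendsto_sup]
    constructor
    · exact hlc T
    · exact rLim_eq_of_not_Dset hg h1.1 ▸ tendsto_g_right hg T

end FilterFacts

section ProdDeriv

variable {K : Type*} [RCLike K]

/-- The candidate `g`-derivative of a product. -/
def prodDeriv (g : ℝ → ℝ) (f₁ f₂ f₁' f₂' : ℝ → K) (s : ℝ) : K :=
  f₁ s * f₂' s + f₂ s * f₁' s + (jump g (tstar g s)) • (f₁' s * f₂' s)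

variable {g : ℝ → ℝ} (hg : Monotone g)
  (hlc : ∀ x : ℝ, ContinuousWithinAt g (Set.Iio x) x)
variable {a b : ℝ} (hab : a < b) (ha : a ∉ Nminus g ∪ Dset g)
  (hb : b ∉ Dset g ∪ Cset g ∪ Nplus g)
variable {f₁ f₂ f₁' f₂' : ℝ → K}

include hg hlc ha hb in
lemma hasSDerivAt_mul
    (hc₁ : ∀ s ∈ Set.Icc a b, GContAt g f₁ (Set.Icc a b) s)
    (hc₂ : ∀ s ∈ Set.Icc a b, GContAt g f₂ (Set.Icc a b) s)
    (hd₁ : ∀ s ∈ Set.Icc a b, HasSDerivAt g a b f₁ s (f₁' s))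
    (hd₂ : ∀ s ∈ Set.Icc a b, HasSDerivAt g a b f₂ s (f₂' s))
    {s : ℝ} (hs : s ∈ Set.Icc a b) :
    HasSDerivAt g a b (fun u => f₁ u * f₂ u) s (prodDeriv g f₁ f₂ f₁' f₂' s) := by
  have hbC : b ∉ Cset g := fun hc => hb (Or.inl (Or.inr hc))
  have hbD : b ∉ Dset g := fun hc => hb (Or.inl (Or.inl hc))
  set T := tstar g s with hT
  have hTIcc : T ∈ Set.Icc a b := ⟨le_trans hs.1 (le_tstar hs.2 hbC), tstar_le hs.2 hbC⟩
  have hTC : T ∉ Cset g := tstar_not_Cset hs.2 hbC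
  have hgT : g T = g s := g_tstar hg hlc hs.2 hbC
  set ℱ := sFilter g a b T with hF
  have h1 : Filter.Tendsto (fun u => (g u - g T)⁻¹ • (f₁ u - f₁ T)) ℱ (𝓝 (f₁' s)) :=
    hd₁ s hs
  have h2 : Filter.Tendsto (fun u => (g u - g T)⁻¹ • (f₂ u - f₂ T)) ℱ (𝓝 (f₂' s)) :=
    hd₂ s hs
  have hgne : ∀ᶠ u in ℱ, g u ≠ g T := eventually_g_ne_sFilter hg hlc ha hb hTC
  have hgl : Filter.Tendsto g ℱ (𝓝 (rLim g T)) := tendsto_g_sFilter hg hlc hbD T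
  have hsubl : Filter.Tendsto (fun u => g u - g T) ℱ (𝓝 (jump g T)) := by
    have : Filter.Tendsto (fun u => g u - g T) ℱ (𝓝 (rLim g T - g T)) :=
      hgl.sub tendsto_const_nhds
    exact this
  -- limit of f₁ itself
  have hf1lim : Filter.Tendsto f₁ ℱ (𝓝 (f₁ T + (jump g T) • f₁' s)) := by
    have hev : ∀ᶠ u in ℱ, f₁ T + (g u - g T) • ((g u - g T)⁻¹ • (f₁ u - f₁ T)) = f₁ u := by
      filter_upwards [hgne] with u hu
      rw [smul_inv_smul₀ (sub_ne_zero.2 hu)]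
      exact add_sub_cancel _ _
    have : Filter.Tendsto
        (fun u => f₁ T + (g u - g T) • ((g u - g T)⁻¹ • (f₁ u - f₁ T))) ℱ
        (𝓝 (f₁ T + (jump g T) • f₁' s)) :=
      tendsto_const_nhds.add (hsubl.smul h1)
    exact this.congr' (by filter_upwards [hev] with u hu using hu)
  -- algebraic identity for the quotient
  have hiden : ∀ u, (g u - g T)⁻¹ • (f₁ u * f₂ u - f₁ T * f₂ T)
      = f₁ u * ((g u - g T)⁻¹ • (f₂ u - f₂ T))
        + ((g u - g T)⁻¹ • (f₁ u - f₁ T)) * f₂ T := by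
    intro u
    rw [mul_smul_comm, smul_mul_assoc, ← smul_add]
    congr 1
    ring
  have hlim : Filter.Tendsto
      (fun u => (g u - g T)⁻¹ • (f₁ u * f₂ u - f₁ T * f₂ T)) ℱ
      (𝓝 ((f₁ T + (jump g T) • f₁' s) * f₂' s + f₁' s * f₂ T)) := by
    have := (hf1lim.mul h2).add (h1.mul (tendsto_const_nhds (x := f₂ T)))
    exact (this.congr (fun u => (hiden u).symm))
  have hfT1 : f₁ T = f₁ s := gcont_eq (hc₁ s hs) hTIcc hgT
  have hfT2 : f₂ T = f₂ s := gcont_eq (hc₂ s hs) hTIcc hgT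
  have hval : (f₁ T + (jump g T) • f₁' s) * f₂' s + f₁' s * f₂ T
      = prodDeriv g f₁ f₂ f₁' f₂' s := by
    rw [hfT1, hfT2]
    unfold prodDeriv
    rw [← hT]
    rw [RCLike.real_smul_eq_coe_mul, RCLike.real_smul_eq_coe_mul]
    ring
  rw [← hval]
  exact hlim

end ProdDeriv

section Qcont

variable {K : Type*} [RCLike K]

/-- The jump part of the product derivative. -/
def Qfun (g : ℝ → ℝ) (f₁' f₂' : ℝ → K) (s : ℝ) : K :=
  (jump g (tstar g s)) • (f₁' s * f₂' s)

variable {g : ℝ → ℝ} (hg : Monotone g)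
  (hlc : ∀ x : ℝ, ContinuousWithinAt g (Set.Iio x) x)
variable {a b : ℝ} (hab : a < b) (ha : a ∉ Nminus g ∪ Dset g)
  (hb : b ∉ Dset g ∪ Cset g ∪ Nplus g)
variable {f₁' f₂' : ℝ → K} {M : ℝ}

include hg hlc hab ha hb in
/-- If `f₁'·f₂'` vanishes on `((a*,b) ∩ A_g) \ H_g` then `Q` is `g`-continuous on `[a,b]`. -/
lemma gcont_Q
    (hc₁' : ∀ s ∈ Set.Icc a b, GContAt g f₁' (Set.Icc a b) s)
    (hc₂' : ∀ s ∈ Set.Icc a b, GContAt g f₂' (Set.Icc a b) s)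
    (hMF : ∀ s ∈ Set.Icc a b, ‖f₁' s * f₂' s‖ ≤ M) (hM0 : 0 ≤ M)
    (hvan : ∀ t ∈ (Set.Ioo (tstar g a) b ∩ Ag g a b) \ Hg g, f₁' t * f₂' t = 0)
    {t : ℝ} (ht : t ∈ Set.Icc a b) :
    GContAt g (Qfun g f₁' f₂') (Set.Icc a b) t := by
  have hbC : b ∉ Cset g := fun hc => hb (Or.inl (Or.inr hc))
  have hbD : b ∉ Dset g := fun hc => hb (Or.inl (Or.inl hc))
  have haD : a ∉ Dset g := fun hc => ha (Or.inr hc)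
  set F : ℝ → K := fun s => f₁' s * f₂' s with hFdef
  -- F is constant on g-level sets
  have hFlevel : ∀ u ∈ Set.Icc a b, ∀ v ∈ Set.Icc a b, g u = g v → F u = F v := by
    intro u hu v hv huv
    have e1 : f₁' u = f₁' v := gcont_eq (hc₁' v hv) hu huv
    have e2 : f₂' u = f₂' v := gcont_eq (hc₂' v hv) hu huv
    simp only [hFdef, e1, e2]
  have hQnorm : ∀ s, ‖Qfun g f₁' f₂' s‖ = jump g (tstar g s) * ‖F s‖ := by
    intro s
    by_cases hj : 0 ≤ jump g (tstar g s)
    · rw [Qfun, norm_smul, Real.norm_eq_abs, abs_of_nonneg hj]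
    · exact absurd (jump_nonneg hg _) hj
  intro ε hε
  set τ := tauL g a b t with hτdef
  have hτIcc : τ ∈ Set.Icc a b := tau_mem_Icc ht
  have hgτ : g τ = g t := g_tau hg hlc ht
  by_cases hτD : τ ∈ Dset g
  · -- Case II : the level of t ends with a jump
    by_cases hHg : t ∈ Hg g
    · -- II (Hg): a maximal block (s₁, s₂]
      obtain ⟨s₁, hs₁D, s₂, hs₂D, ⟨hts₁, hts₂⟩, hsub⟩ := hHg
      have hs₁s₂ : s₁ < s₂ := lt_of_lt_of_le hts₁ hts₂
      have hval : ∀ u ∈ Set.Ioc s₁ s₂, g u = g s₂ := by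
        rintro u ⟨hu1, hu2⟩
        rcases eq_or_lt_of_le hu2 with rfl | hu2'
        · rfl
        · exact g_eq_left hg hlc hs₁s₂ hsub u ⟨hu1, hu2'⟩
      have hgt2 : g t = g s₂ := hval t ⟨hts₁, hts₂⟩
      have hs₂b : s₂ ≤ b := by
        by_contra hc
        push_neg at hc
        exact hbC (hsub ⟨lt_of_lt_of_le hts₁ ht.2, hc⟩)
      have hrl₁ : rLim g s₁ = g s₂ := by
        have h1 := g_eq_rLim_right hg hlc hs₁s₂ hsub ((s₁ + s₂)/2)
          ⟨by linarith, by linarith⟩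
        have h2 := hval ((s₁ + s₂)/2) ⟨by linarith, by linarith⟩
        rw [← h1, h2]
      have hgs₁ : g s₁ < g s₂ := by
        have : (0:ℝ) < jump g s₁ := hs₁D
        unfold jump at this
        rw [hrl₁] at this
        linarith
      have hstar : ∀ u ∈ Set.Ioc s₁ s₂, tstar g u = s₂ :=
        fun u hu => tstar_block hs₁s₂ hsub (not_Cset_of_Dset hg hs₁D)
          (not_Cset_of_Dset hg hs₂D) hu
      have hQt : Qfun g f₁' f₂' t = (jump g s₂) • F t := by
        rw [Qfun, hstar t ⟨hts₁, hts₂⟩]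
      have hj₁ : (0:ℝ) < jump g s₁ := hs₁D
      have hj₂ : (0:ℝ) < jump g s₂ := hs₂D
      refine ⟨min (jump g s₂) (jump g s₁), lt_min hj₂ hj₁, ?_⟩
      intro s hs hgs
      have hm1 := min_le_left (jump g s₂) (jump g s₁)
      have hm2 := min_le_right (jump g s₂) (jump g s₁)
      rcases lt_trichotomy (g s) (g t) with hcmp | hcmp | hcmp
      · -- g s < g t : then s ≤ s₁ and the gap is at least jump s₁
        exfalso
        have hss₁ : s ≤ s₁ := by
          by_contra hc
          push_neg at hc
          rcases le_or_gt s s₂ with h' | h'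
          · rw [hval s ⟨hc, h'⟩, ← hgt2] at hcmp; exact lt_irrefl _ hcmp
          · have := rLim_le hg h'
            have h2 : (0:ℝ) < jump g s₂ := hs₂D
            unfold jump at h2
            rw [hgt2] at hcmp
            linarith
        have h1 : g s ≤ g s₁ := hg hss₁
        have hjv : jump g s₁ = g s₂ - g s₁ := by
          unfold jump; rw [hrl₁]
        rw [abs_lt] at hgs
        linarith [hgs.2, hgt2]
      · -- g s = g t : s is in the block, Q s = Q t
        have hss₂ : s ≤ s₂ := by
          by_contra hc
          push_neg at hc
          have := rLim_le hg hc
          have h2 : (0:ℝ) < jump g s₂ := hs₂D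
          unfold jump at h2
          rw [hcmp, hgt2] at this
          linarith
        have hss₁ : s₁ < s := by
          by_contra hc
          push_neg at hc
          have := hg hc
          rw [hcmp, hgt2] at this
          linarith
        have hQs : Qfun g f₁' f₂' s = (jump g s₂) • F s := by
          rw [Qfun, hstar s ⟨hss₁, hss₂⟩]
        have hFst : F s = F t := hFlevel s hs t ht hcmp
        rw [hQt, hQs, hFst, sub_self, norm_zero]
        exact hε
      · -- g s > g t : gap at least jump s₂
        exfalso
        have hts : s₂ < s := by
          by_contra hc
          push_neg at hc
          have := hg hc
          rw [← hgt2] at this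
          linarith
        have h3 := rLim_le hg hts
        have hjv : jump g s₂ = rLim g s₂ - g s₂ := rfl
        rw [abs_lt] at hgs
        linarith [hgs.1, hgt2]
    · by_cases hIoo : t ∈ Set.Ioo (tstar g a) b
      · -- II.a : t ∈ S, so F t = 0
        have hF0 : F t = 0 := hvan t ⟨⟨hIoo, hτD⟩, hHg⟩
        have hjτ : (0:ℝ) < jump g τ := hτD
        refine ⟨min (jump g τ) (ε / (M + 1)), lt_min hjτ (by positivity), ?_⟩
        intro s hs hgs
        have hm1 := min_le_left (jump g τ) (ε / (M + 1))
        have hm2 := min_le_right (jump g τ) (ε / (M + 1))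
        have hF0' : f₁' t * f₂' t = 0 := hF0
        have hQt : Qfun g f₁' f₂' t = 0 := by rw [Qfun, hF0', smul_zero]
        rw [hQt, zero_sub, norm_neg]
        rcases lt_trichotomy (g s) (g t) with hcmp | hcmp | hcmp
        · -- below the level : jump of s* is small
          have hjs : jump g (tstar g s) ≤ g t - g s := by
            have := jump_tstar_le hg hlc hs hbC (t' := t) hcmp
            linarith
          have hFs : ‖F s‖ ≤ M := hMF s hs
          rw [abs_lt] at hgs
          calc ‖Qfun g f₁' f₂' s‖ = jump g (tstar g s) * ‖F s‖ := hQnorm s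
          _ ≤ (g t - g s) * ‖F s‖ :=
              mul_le_mul_of_nonneg_right hjs (norm_nonneg _)
          _ ≤ (g t - g s) * M := by
              apply mul_le_mul_of_nonneg_left hFs
              linarith
          _ ≤ (ε / (M + 1)) * M :=
              mul_le_mul_of_nonneg_right (by linarith [hgs.2]) hM0
          _ < ε := by
              rw [div_mul_eq_mul_div]
              rw [div_lt_iff₀ (by linarith : (0:ℝ) < M + 1)]
              nlinarith
        · have hFs : f₁' s * f₂' s = 0 := by
            have h1 : F s = F t := hFlevel s hs t ht hcmp
            have h2 : f₁' s * f₂' s = F s := rfl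
            rw [h2, h1, hF0]
          rw [Qfun, hFs, smul_zero, norm_zero]
          exact hε
        · exfalso
          have hts : τ < s := tau_lt_of_g_gt hg hlc ht hcmp
          have h3 := rLim_le hg hts
          have hjv : jump g τ = rLim g τ - g τ := rfl
          rw [abs_lt] at hgs
          linarith [hgs.1, hgτ]
      · -- II.b(i) : t ≤ a*
        have htb : t < b := by
          rcases eq_or_lt_of_le ht.2 with h | h
          · exfalso
            apply hbD
            have h1 : b ≤ τ := h ▸ le_tau ht
            have h2 : τ ≤ b := hτIcc.2
            rw [← le_antisymm h2 h1]
            exact hτD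
          · exact h
        have htast : t ≤ tstar g a := by
          by_contra hc
          push_neg at hc
          exact hIoo ⟨hc, htb⟩
        -- a must be in Cset
        have haC : a ∈ Cset g := by
          by_contra haC
          have hta : t = a := le_antisymm (by rwa [tstar_of_not_Cset haC] at htast) ht.1
          subst hta
          have htτ : t < τ := by
            rcases eq_or_lt_of_le (le_tau ht) with h | h
            · exact absurd (h ▸ hτD) haD
            · exact h
          have hsub : Set.Ioo t τ ⊆ Cset g := Ioo_subset_Cset hg hgτ.symm
          exact ha (Or.inl ⟨⟨haC, τ, htτ, hsub⟩, haD⟩)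
        set astar := tstar g a with hastar
        have haast : a < astar := lt_tstar_of_Cset haC (le_of_lt hab) hbC
        have hgast : g astar = g a := g_tstar hg hlc (le_of_lt hab) hbC
        have hastb : astar ≤ b := tstar_le (le_of_lt hab) hbC
        have hastC : astar ∉ Cset g := tstar_not_Cset (le_of_lt hab) hbC
        have hgta : g t = g a :=
          g_const_between hg hgast.symm ht.1 htast
        -- τ = astar
        have hastlev : astar ∈ Set.Icc a b := ⟨le_of_lt haast, hastb⟩
        have hτast : τ = astar := by
          apply le_antisymm
          · by_contra hc
            push_neg at hc
            apply hastC
            have hgτa : g a = g τ := by rw [hgτ, hgta]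
            exact Ioo_subset_Cset hg hgτa ⟨haast, hc⟩
          · exact le_tau_of_level hastlev (by rw [hgast, ← hgta])
        -- tstar of points in the level is astar
        have hstar : ∀ u, u ∈ Set.Icc a b → g u = g a → tstar g u = astar := by
          intro u hu hgu
          have huτ : u ≤ astar := by
            rw [← hτast]
            exact le_tau_of_level hu (by rw [hgu, ← hgta])
          rcases eq_or_lt_of_le huτ with rfl | hult
          · exact tstar_of_not_Cset hastC
          · rcases eq_or_lt_of_le hu.1 with rfl | halt
            · rfl
            · -- a < u < astar : u is in the component of a
              have hucomp : u ∈ connectedComponentIn (Cset g) a := by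
                have hne : (connectedComponentIn (Cset g) a).Nonempty :=
                  ⟨a, mem_connectedComponentIn haC⟩
                have : u < sSup (connectedComponentIn (Cset g) a) := by
                  have : tstar g a = sSup (connectedComponentIn (Cset g) a) := by
                    unfold tstar; rw [if_pos haC]
                  rw [← this]; exact hult
                obtain ⟨w, hw, hw'⟩ := exists_lt_of_lt_csSup hne this
                exact (comp_ordConnected (g := g) a).out (mem_connectedComponentIn haC)
                  hw ⟨le_of_lt halt, le_of_lt hw'⟩
              have huC : u ∈ Cset g := connectedComponentIn_subset _ _ hucomp
              have : connectedComponentIn (Cset g) u = connectedComponentIn (Cset g) a :=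
                (connectedComponentIn_eq hucomp).symm
              unfold tstar
              rw [if_pos huC, this]
              unfold tstar at hastar
              rw [hastar, if_pos haC]
        have hjast : (0:ℝ) < jump g astar := by rw [← hτast]; exact hτD
        refine ⟨jump g astar, hjast, ?_⟩
        intro s hs hgs
        have hgsa : g a ≤ g s := hg hs.1
        rcases eq_or_lt_of_le hgsa with hcmp | hcmp
        · -- g s = g a = g t : same tstar
          have hQs : Qfun g f₁' f₂' s = (jump g astar) • F s := by
            rw [Qfun, hstar s hs hcmp.symm]
          have hQt : Qfun g f₁' f₂' t = (jump g astar) • F t := by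
            rw [Qfun, hstar t ht hgta]
          have hFst : F t = F s := hFlevel t ht s hs (by rw [hgta, hcmp])
          rw [hQs, hQt, hFst, sub_self, norm_zero]
          exact hε
        · -- g s > g t : gap at least jump astar
          exfalso
          have hts : τ < s := tau_lt_of_g_gt hg hlc ht (by rwa [hgta])
          have h3 := rLim_le hg hts
          rw [hτast] at h3
          have hjv : jump g astar = rLim g astar - g astar := rfl
          rw [abs_lt] at hgs
          linarith [hgs.1, hgast, hgta]
  · -- Case I : no jump at the end of the level; Q t = 0 and nearby jumps are small
    have hQt : Qfun g f₁' f₂' t = 0 := by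
      have hj0 : jump g (tstar g t) = 0 := by
        rcases eq_or_lt_of_le (jump_nonneg hg (tstar g t)) with h | h
        · exact h.symm
        · exfalso
          apply hτD
          rw [hτdef, ← tstar_eq_tau_of_jump hg hlc ht hbC h]
          exact h
      rw [Qfun, hj0, zero_smul]
    set ε' := ε / (M + 1) with hε'
    have hε'0 : 0 < ε' := by positivity
    obtain ⟨δ₀, hδ₀, hδ₀'⟩ := small_jumps hg t hε'0
    refine ⟨min δ₀ ε', lt_min hδ₀ hε'0, ?_⟩
    intro s hs hgs
    have hm1 := min_le_left δ₀ ε'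
    have hm2 := min_le_right δ₀ ε'
    rw [hQt, zero_sub, norm_neg]
    by_cases hj : jump g (tstar g s) = 0
    · rw [Qfun, hj, zero_smul, norm_zero]; exact hε
    · have hjpos : 0 < jump g (tstar g s) :=
        lt_of_le_of_ne (jump_nonneg hg _) (Ne.symm hj)
      have hσD : tstar g s ∈ Dset g := hjpos
      have hgσ : g (tstar g s) = g s := g_tstar hg hlc hs.2 hbC
      have hjs : jump g (tstar g s) < ε' := by
        rcases lt_trichotomy (g s) (g t) with hcmp | hcmp | hcmp
        · have h1 := jump_tstar_le hg hlc hs hbC (t' := t) hcmp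
          rw [abs_lt] at hgs
          linarith
        · exfalso
          apply hτD
          have h1 : tstar g s = tauL g a b s := tstar_eq_tau_of_jump hg hlc hs hbC hjpos
          have h2 : tauL g a b s = tauL g a b t := tau_congr hcmp
          rw [← hτdef] at h2
          rw [h1, h2] at hσD
          exact hσD
        · apply hδ₀' (tstar g s) hσD (by rwa [hgσ])
          rw [hgσ]
          rw [abs_lt] at hgs
          linarith [hgs.1, hm1]
      calc ‖Qfun g f₁' f₂' s‖ = jump g (tstar g s) * ‖F s‖ := hQnorm s
      _ ≤ jump g (tstar g s) * M :=
          mul_le_mul_of_nonneg_left (hMF s hs) (le_of_lt hjpos)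
      _ ≤ ε' * M := mul_le_mul_of_nonneg_right (le_of_lt hjs) hM0
      _ < ε := by
          rw [hε', div_mul_eq_mul_div, div_lt_iff₀ (by linarith : (0:ℝ) < M + 1)]
          nlinarith

end Qcont

section Vanish

variable {K : Type*} [RCLike K]
variable {g : ℝ → ℝ} (hg : Monotone g)
  (hlc : ∀ x : ℝ, ContinuousWithinAt g (Set.Iio x) x)
variable {a b : ℝ} (hab : a < b) (ha : a ∉ Nminus g ∪ Dset g)
  (hb : b ∉ Dset g ∪ Cset g ∪ Nplus g)
variable {f₁' f₂' : ℝ → K} {M : ℝ}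

include hg hlc hab ha hb in
/-- If `Q` is `g`-continuous on `[a,b]`, then `f₁'·f₂'` vanishes on
`((a*,b) ∩ A_g) \ H_g`. -/
lemma vanish_of_gcont_Q
    (hc₁' : ∀ s ∈ Set.Icc a b, GContAt g f₁' (Set.Icc a b) s)
    (hc₂' : ∀ s ∈ Set.Icc a b, GContAt g f₂' (Set.Icc a b) s)
    (hMF : ∀ s ∈ Set.Icc a b, ‖f₁' s * f₂' s‖ ≤ M) (hM0 : 0 ≤ M)
    (hQcont : ∀ u ∈ Set.Icc a b, GContAt g (Qfun g f₁' f₂') (Set.Icc a b) u) :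
    ∀ t ∈ (Set.Ioo (tstar g a) b ∩ Ag g a b) \ Hg g, f₁' t * f₂' t = 0 := by
  have hbC : b ∉ Cset g := fun hc => hb (Or.inl (Or.inr hc))
  rintro t ⟨⟨hIoo, hAg⟩, hHg⟩
  by_contra hF
  have hFpos : 0 < ‖f₁' t * f₂' t‖ := norm_pos_iff.2 hF
  have hta : a < t := lt_of_le_of_lt (le_tstar (le_of_lt hab) hbC) hIoo.1
  have ht : t ∈ Set.Icc a b := ⟨le_of_lt hta, le_of_lt hIoo.2⟩
  set τ := tauL g a b t with hτdef
  have hτD : τ ∈ Dset g := hAg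
  have hτIcc : τ ∈ Set.Icc a b := tau_mem_Icc ht
  have hgτ : g τ = g t := g_tau hg hlc ht
  have hτC : τ ∉ Cset g := not_Cset_of_Dset hg hτD
  have hτstar : tstar g τ = τ := tstar_of_not_Cset hτC
  have hjτ : (0:ℝ) < jump g τ := hτD
  have hFτ : f₁' τ * f₂' τ = f₁' t * f₂' t := by
    have e1 : f₁' τ = f₁' t := gcont_eq (hc₁' t ht) hτIcc hgτ
    have e2 : f₂' τ = f₂' t := gcont_eq (hc₂' t ht) hτIcc hgτ
    rw [e1, e2]
  have hQτ : Qfun g f₁' f₂' τ = (jump g τ) • (f₁' t * f₂' t) := by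
    rw [Qfun, hτstar, hFτ]
  have hQτnorm : ‖Qfun g f₁' f₂' τ‖ = jump g τ * ‖f₁' t * f₂' t‖ := by
    rw [hQτ, norm_smul, Real.norm_eq_abs, abs_of_nonneg (le_of_lt hjτ)]
  set ε₀ := jump g τ * ‖f₁' t * f₂' t‖ / 2 with hε₀def
  have hε₀ : 0 < ε₀ := by positivity
  obtain ⟨δ, hδ, hδ'⟩ := hQcont τ hτIcc ε₀ hε₀
  -- the infimum of the level set
  set σ := sInf {s | s ∈ Set.Icc a b ∧ g s = g t} with hσdef
  have hlevne : {s | s ∈ Set.Icc a b ∧ g s = g t}.Nonempty := ⟨t, ht, rfl⟩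
  have hlevbdd : BddBelow {s | s ∈ Set.Icc a b ∧ g s = g t} := ⟨a, fun u hu => hu.1.1⟩
  have hσa : a ≤ σ := le_csInf hlevne (fun u hu => hu.1.1)
  have hσt : σ ≤ t := csInf_le hlevbdd ⟨ht, rfl⟩
  have htτ : t ≤ τ := le_tau ht
  -- σ > a
  have hσa' : a < σ := by
    rcases lt_or_eq_of_le hσa with h | h
    · exact h
    · exfalso
      -- the whole of (a, τ) is in Cset
      have haτ : a < τ := lt_of_lt_of_le hta htτ
      have hsub : Set.Ioo a τ ⊆ Cset g := by
        rintro u ⟨hu1, hu2⟩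
        have : sInf {s | s ∈ Set.Icc a b ∧ g s = g t} < u := by
          rw [← hσdef, ← h]; exact hu1
        obtain ⟨w, hw, hw'⟩ := exists_lt_of_csInf_lt hlevne this
        have hwτ : g w = g τ := by rw [hw.2, hgτ]
        exact Ioo_subset_Cset hg hwτ ⟨hw', hu2⟩
      by_cases haC : a ∈ Cset g
      · -- then tstar g a ≥ τ ≥ t, contradicting t > tstar g a
        have hIco : Set.Ico a τ ⊆ connectedComponentIn (Cset g) a := by
          apply isPreconnected_Ico.subset_connectedComponentIn ⟨le_rfl, haτ⟩
          rintro u ⟨hu1, hu2⟩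
          rcases eq_or_lt_of_le hu1 with rfl | hu1'
          · exact haC
          · exact hsub ⟨hu1', hu2⟩
        have h1 : tstar g a = sSup (connectedComponentIn (Cset g) a) := by
          unfold tstar; rw [if_pos haC]
        have h2 : τ ≤ tstar g a := by
          rw [h1]
          have hbdd : BddAbove (connectedComponentIn (Cset g) a) :=
            comp_bddAbove haC (le_of_lt hab) hbC
          calc τ = sSup (Set.Ico a τ) := (csSup_Ico haτ).symm
          _ ≤ sSup (connectedComponentIn (Cset g) a) :=
              csSup_le_csSup hbdd ⟨a, le_rfl, haτ⟩ hIco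
        exact absurd hIoo.1 (not_lt.2 (le_trans htτ h2))
      · exact ha (Or.inl ⟨⟨haC, τ, haτ, hsub⟩, fun h => ha (Or.inr h)⟩)
  by_cases hσlev : g σ = g t
  · -- approximate from the left of σ
    set θ := min δ (ε₀ / (M + 1)) with hθdef
    have hθ : 0 < θ := lt_min hδ (by positivity)
    have hev1 : ∀ᶠ u in 𝓝[<] σ, |g u - g σ| < θ := by
      have h2 := Metric.tendsto_nhds.1 (hlc σ) θ hθ
      filter_upwards [h2] with u hu
      rw [← Real.dist_eq]
      exact hu
    have hev2 : Set.Ioo a σ ∈ 𝓝[<] σ := Ioo_mem_nhdsLT_of_mem ⟨hσa', le_rfl⟩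
    haveI : (𝓝[<] (σ:ℝ)).NeBot := inferInstance
    obtain ⟨s, hsθ, hsIoo⟩ := (hev1.and (Filter.eventually_of_mem hev2 (fun u hu => hu))).exists
    have hsIcc : s ∈ Set.Icc a b :=
      ⟨le_of_lt hsIoo.1, le_trans (le_of_lt hsIoo.2) (le_trans hσt ht.2)⟩
    have hgst : g s < g t := by
      have h1 : g s ≤ g σ := hg (le_of_lt hsIoo.2)
      rcases eq_or_lt_of_le h1 with h | h
      · exfalso
        have : s ∈ {s | s ∈ Set.Icc a b ∧ g s = g t} := ⟨hsIcc, by rw [h, hσlev]⟩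
        have := csInf_le hlevbdd this
        rw [← hσdef] at this
        linarith [hsIoo.2]
      · rw [hσlev] at h; exact h
    have hgap : |g τ - g s| < δ := by
      rw [hgτ]
      have : |g s - g σ| < θ := hsθ
      rw [abs_lt] at this ⊢
      rw [hσlev] at this
      constructor
      · linarith [this.1, min_le_left δ (ε₀ / (M + 1))]
      · linarith [this.2, min_le_left δ (ε₀ / (M + 1))]
    have hQs : ‖Qfun g f₁' f₂' s‖ ≤ ε₀ := by
      have hjs : jump g (tstar g s) ≤ g t - g s := by
        have := jump_tstar_le hg hlc hsIcc hbC (t' := t) hgst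
        linarith
      have h1 : ‖Qfun g f₁' f₂' s‖ = jump g (tstar g s) * ‖f₁' s * f₂' s‖ := by
        rw [Qfun, norm_smul, Real.norm_eq_abs, abs_of_nonneg (jump_nonneg hg _)]
      have h2 : g t - g s < ε₀ / (M + 1) := by
        have : |g s - g σ| < θ := hsθ
        rw [abs_lt] at this
        rw [hσlev] at this
        linarith [this.1, min_le_right δ (ε₀ / (M + 1))]
      calc ‖Qfun g f₁' f₂' s‖ = jump g (tstar g s) * ‖f₁' s * f₂' s‖ := h1
      _ ≤ (g t - g s) * M := by
          apply mul_le_mul hjs (hMF s hsIcc) (norm_nonneg _)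
          linarith [hgst]
      _ ≤ (ε₀ / (M + 1)) * M :=
          mul_le_mul_of_nonneg_right (le_of_lt h2) hM0
      _ ≤ ε₀ := by
          rw [div_mul_eq_mul_div, div_le_iff₀ (by linarith : (0:ℝ) < M + 1)]
          nlinarith
    have hcontr := hδ' s hsIcc hgap
    have hlow : ε₀ ≤ ‖Qfun g f₁' f₂' τ - Qfun g f₁' f₂' s‖ := by
      have h1 := norm_sub_norm_le (Qfun g f₁' f₂' τ) (Qfun g f₁' f₂' s)
      rw [hQτnorm] at h1
      have : jump g τ * ‖f₁' t * f₂' t‖ = 2 * ε₀ := by rw [hε₀def]; ring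
      linarith
    linarith
  · -- g σ < g t : then t ∈ Hg, contradiction
    exfalso
    have hgσt : g σ < g t := by
      rcases lt_or_eq_of_le (by
        have h1 : σ ≤ t := hσt
        exact hg h1) with h | h
      · exact h
      · exact absurd h hσlev
    have hσlt : σ < t := by
      rcases lt_or_eq_of_le hσt with h | h
      · exact h
      · exfalso; rw [h] at hgσt; exact lt_irrefl _ hgσt
    have hστ : σ < τ := lt_of_lt_of_le hσlt htτ
    -- rLim g σ = g t
    have hrlσ : rLim g σ = g t := by
      apply le_antisymm
      · exact hgτ ▸ (hgτ ▸ rLim_le hg hσlt)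
      · apply le_csInf (Set.nonempty_Ioi.image g)
        rintro x ⟨u, hu, rfl⟩
        have : sInf {s | s ∈ Set.Icc a b ∧ g s = g t} < u := by rw [← hσdef]; exact hu
        obtain ⟨w, hw, hw'⟩ := exists_lt_of_csInf_lt hlevne this
        calc g t = g w := hw.2.symm
        _ ≤ g u := hg (le_of_lt hw')
    have hσD : σ ∈ Dset g := by
      have : jump g σ = g t - g σ := by unfold jump; rw [hrlσ]
      show (0:ℝ) < jump g σ
      rw [this]
      linarith
    have hsub : Set.Ioo σ τ ⊆ Cset g := by
      rintro u ⟨hu1, hu2⟩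
      have : sInf {s | s ∈ Set.Icc a b ∧ g s = g t} < u := by rw [← hσdef]; exact hu1
      obtain ⟨w, hw, hw'⟩ := exists_lt_of_csInf_lt hlevne this
      have hwτ : g w = g τ := by rw [hw.2, hgτ]
      exact Ioo_subset_Cset hg hwτ ⟨hw', hu2⟩
    exact hHg ⟨σ, hσD, τ, hτD, ⟨hσlt, htτ⟩, hsub⟩

end Vanish

/-- Characterization of when the product of two `BC¹_g` functions is again `BC¹_g`. -/
theorem stmt17 {K : Type*} [RCLike K] (g : ℝ → ℝ) (hg : Monotone g)
    (hlc : ∀ x : ℝ, ContinuousWithinAt g (Set.Iio x) x)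
    (a b : ℝ) (hab : a < b) (ha : a ∉ Nminus g ∪ Dset g)
    (hb : b ∉ Dset g ∪ Cset g ∪ Nplus g)
    (f₁ f₂ f₁' f₂' : ℝ → K)
    (hf₁ : MemBCg g a b f₁) (hf₂ : MemBCg g a b f₂)
    (hd₁ : ∀ s ∈ Set.Icc a b, HasSDerivAt g a b f₁ s (f₁' s))
    (hd₂ : ∀ s ∈ Set.Icc a b, HasSDerivAt g a b f₂ s (f₂' s))
    (hf₁' : MemBCg g a b f₁') (hf₂' : MemBCg g a b f₂') :
    MemBC1g g a b (fun s => f₁ s * f₂ s) ↔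
      ∀ t ∈ (Set.Ioo (tstar g a) b ∩ Ag g a b) \ Hg g, f₁' t * f₂' t = 0 := by
  have hbC : b ∉ Cset g := fun hc => hb (Or.inl (Or.inr hc))
  obtain ⟨⟨M₁, hM₁⟩, hgc₁⟩ := hf₁
  obtain ⟨⟨M₂, hM₂⟩, hgc₂⟩ := hf₂
  obtain ⟨⟨M₁', hM₁'⟩, hgc₁'⟩ := hf₁'
  obtain ⟨⟨M₂', hM₂'⟩, hgc₂'⟩ := hf₂'
  set MF := max M₁' 0 * max M₂' 0 with hMFdef
  have hMF0 : 0 ≤ MF := mul_nonneg (le_max_right _ _) (le_max_right _ _)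
  have hMF : ∀ s ∈ Set.Icc a b, ‖f₁' s * f₂' s‖ ≤ MF := by
    intro s hs
    rw [norm_mul]
    apply mul_le_mul (le_trans (hM₁' s hs) (le_max_left _ _))
      (le_trans (hM₂' s hs) (le_max_left _ _)) (norm_nonneg _) (le_max_right _ _)
  have hprodD : ∀ s ∈ Set.Icc a b,
      HasSDerivAt g a b (fun u => f₁ u * f₂ u) s (prodDeriv g f₁ f₂ f₁' f₂' s) :=
    fun s hs => hasSDerivAt_mul hg hlc ha hb hgc₁ hgc₂ hd₁ hd₂ hs
  have hsum : ∀ u ∈ Set.Icc a b,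
      GContAt g (fun s => f₁ s * f₂' s + f₂ s * f₁' s) (Set.Icc a b) u := by
    intro u hu
    exact (GContAt.mul hM₂' (hgc₁ u hu) (hgc₂' u hu)).add
      (GContAt.mul hM₁' (hgc₂ u hu) (hgc₁' u hu))
  constructor
  · rintro ⟨hBCprod, h, hDh, hBCh⟩
    have heq : ∀ v ∈ Set.Icc a b, h v = prodDeriv g f₁ f₂ f₁' f₂' v :=
      fun v hv => sderiv_unique hab ha hb hv (hDh v hv) (hprodD v hv)
    have hQcont : ∀ u ∈ Set.Icc a b, GContAt g (Qfun g f₁' f₂') (Set.Icc a b) u := by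
      intro u hu
      have hP : GContAt g (prodDeriv g f₁ f₂ f₁' f₂') (Set.Icc a b) u :=
        GContAt.congr hu heq (hBCh.2 u hu)
      have hsub := hP.sub (hsum u hu)
      apply GContAt.congr hu _ hsub
      intro s _
      simp only [prodDeriv, Qfun, RCLike.real_smul_eq_coe_mul]
      ring
    exact vanish_of_gcont_Q hg hlc hab ha hb hgc₁' hgc₂' hMF hMF0 hQcont
  · intro hvan
    have hQcont : ∀ u ∈ Set.Icc a b, GContAt g (Qfun g f₁' f₂') (Set.Icc a b) u :=
      fun u hu => gcont_Q hg hlc hab ha hb hgc₁' hgc₂' hMF hMF0 hvan hu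
    refine ⟨⟨⟨max M₁ 0 * max M₂ 0, ?_⟩, ?_⟩, prodDeriv g f₁ f₂ f₁' f₂', hprodD,
      ⟨max M₁ 0 * max M₂' 0 + max M₂ 0 * max M₁' 0 + (g (b+1) - g a) * MF, ?_⟩, ?_⟩
    · intro s hs
      rw [norm_mul]
      exact mul_le_mul (le_trans (hM₁ s hs) (le_max_left _ _))
        (le_trans (hM₂ s hs) (le_max_left _ _)) (norm_nonneg _) (le_max_right _ _)
    · intro u hu
      exact GContAt.mul hM₂ (hgc₁ u hu) (hgc₂ u hu)
    · intro s hs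
      have hjb : jump g (tstar g s) ≤ g (b+1) - g a := by
        have h1 : tstar g s ≤ b := tstar_le hs.2 hbC
        have h2 : a ≤ tstar g s := le_trans hs.1 (le_tstar hs.2 hbC)
        have h3 : rLim g (tstar g s) ≤ g (b+1) := rLim_le hg (by linarith)
        have h4 : g a ≤ g (tstar g s) := hg h2
        unfold jump
        linarith
      have hj0 : 0 ≤ jump g (tstar g s) := jump_nonneg hg _
      have e1 : ‖f₁ s * f₂' s‖ ≤ max M₁ 0 * max M₂' 0 := by
        rw [norm_mul]
        exact mul_le_mul (le_trans (hM₁ s hs) (le_max_left _ _))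
          (le_trans (hM₂' s hs) (le_max_left _ _)) (norm_nonneg _) (le_max_right _ _)
      have e2 : ‖f₂ s * f₁' s‖ ≤ max M₂ 0 * max M₁' 0 := by
        rw [norm_mul]
        exact mul_le_mul (le_trans (hM₂ s hs) (le_max_left _ _))
          (le_trans (hM₁' s hs) (le_max_left _ _)) (norm_nonneg _) (le_max_right _ _)
      have e3 : ‖(jump g (tstar g s)) • (f₁' s * f₂' s)‖ ≤ (g (b+1) - g a) * MF := by
        rw [norm_smul, Real.norm_eq_abs, abs_of_nonneg hj0]
        exact mul_le_mul hjb (hMF s hs) (norm_nonneg _) (by linarith)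
      calc ‖prodDeriv g f₁ f₂ f₁' f₂' s‖
          ≤ ‖f₁ s * f₂' s + f₂ s * f₁' s‖ + ‖(jump g (tstar g s)) • (f₁' s * f₂' s)‖ :=
            norm_add_le _ _
      _ ≤ (‖f₁ s * f₂' s‖ + ‖f₂ s * f₁' s‖) + ‖(jump g (tstar g s)) • (f₁' s * f₂' s)‖ := by
            have := norm_add_le (f₁ s * f₂' s) (f₂ s * f₁' s)
            linarith
      _ ≤ max M₁ 0 * max M₂' 0 + max M₂ 0 * max M₁' 0 + (g (b+1) - g a) * MF := by
            linarith
    · intro u hu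
      have := (hsum u hu).add (hQcont u hu)
      apply GContAt.congr hu _ this
      intro s _
      rfl
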